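/- In the subtype system for union-intersection types (with raw types R ::= α | S→T, subsidiary types S ::= ⋂R, types T ::= ⋃S), the reflexivity rule T ≤ T and the transitivity rule (T ≤ T' and T' ≤ T'' imply T ≤ T'') are admissible: any judgment T ≤ T' derivable in the system extended by reflexivity and transitivity is derivable in the pure system. -/
import Mathlib


/-! ## Union-intersection types -/

mutual
/-- Raw types `R ::= α | S → T`. -/
inductive RawTy : Type
  | atom : ℕ → RawTy
  | arrow : STy → TTy → RawTy
/-- Subsidiary types: finite formal intersections of raw types
    (the empty intersection is ω). -/
inductive STy : Type
  | inter : List RawTy → STy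
/-- Types: finite formal unions of subsidiary types
    (the empty union is Ʊ). -/
inductive TTy : Type
  | union : List STy → TTy
end

/-- A subsidiary type regarded as a type (a singleton union). -/
def STy.toT (S : STy) : TTy := .union [S]
/-- A raw type regarded as a subsidiary type (a singleton intersection). -/
def RawTy.toS (R : RawTy) : STy := .inter [R]

/-- ω, the empty intersection. -/
def STy.omega : STy := .inter []
/-- Ʊ, the empty union. -/
def TTy.agemo : TTy := .union []

mutual
/-- The subtype relation on raw types. -/
inductive SubR : RawTy → RawTy → Prop
  | atom (a : ℕ) : SubR (.atom a) (.atom a)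
  | arrow {S S' T T'} : SubS S' S → SubT T T' → SubR (.arrow S T) (.arrow S' T')
/-- The subtype relation on subsidiary types.  Intersections are taken up to
    associativity and commutativity; `weaken` is the projection rule
    `S ≤ S' ⟹ S ∩ S'' ≤ S'` and `pair` the pairing rule. -/
inductive SubS : STy → STy → Prop
  | ofRaw {R R'} : SubR R R' → SubS (.inter [R]) (.inter [R'])
  | weaken {l l' : List RawTy} {S'} : SubS (.inter l) S' → l.Subperm l' →
      SubS (.inter l') S'
  | pair {S} {l' : List RawTy} : (∀ R' ∈ l', SubS S (.inter [R'])) →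
      SubS S (.inter l')
/-- The subtype relation on types.  `widen` is the injection rule
    `T ≤ T' ⟹ T ≤ T'' ∪ T'` and `copair` the copairing rule. -/
inductive SubT : TTy → TTy → Prop
  | ofS {S S'} : SubS S S' → SubT (.union [S]) (.union [S'])
  | widen {T} {l l' : List STy} : SubT T (.union l) → l.Subperm l' →
      SubT T (.union l')
  | copair {l : List STy} {T} : (∀ S ∈ l, SubT (.union [S]) T) →
      SubT (.union l) T
end

mutual
/-- The subtype system extended by the reflexivity and transitivity rules
    (both for subsidiary types and for types). -/
inductive SubR1 : RawTy → RawTy → Prop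
  | atom (a : ℕ) : SubR1 (.atom a) (.atom a)
  | arrow {S S' T T'} : SubS1 S' S → SubT1 T T' → SubR1 (.arrow S T) (.arrow S' T')
inductive SubS1 : STy → STy → Prop
  | ofRaw {R R'} : SubR1 R R' → SubS1 (.inter [R]) (.inter [R'])
  | weaken {l l' : List RawTy} {S'} : SubS1 (.inter l) S' → l.Subperm l' →
      SubS1 (.inter l') S'
  | pair {S} {l' : List RawTy} : (∀ R' ∈ l', SubS1 S (.inter [R'])) →
      SubS1 S (.inter l')
  | refl (S : STy) : SubS1 S S
  | trans {S S' S''} : SubS1 S S' → SubS1 S' S'' → SubS1 S S''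
inductive SubT1 : TTy → TTy → Prop
  | ofS {S S'} : SubS1 S S' → SubT1 (.union [S]) (.union [S'])
  | widen {T} {l l' : List STy} : SubT1 T (.union l) → l.Subperm l' →
      SubT1 T (.union l')
  | copair {l : List STy} {T} : (∀ S ∈ l, SubT1 (.union [S]) T) →
      SubT1 (.union l) T
  | refl (T : TTy) : SubT1 T T
  | trans {T T' T''} : SubT1 T T' → SubT1 T' T'' → SubT1 T T''
end


/-! ### Auxiliary lemmas -/

/-- The list of raw types in an intersection. -/
def STy.raws : STy → List RawTy
  | .inter l => l

/-- The list of subsidiary types in a union. -/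
def TTy.parts : TTy → List STy
  | .union l => l

/-- Characterization of `SubS`, forward direction. -/
theorem charS_aux : ∀ {S S' : STy}, SubS S S' →
    ∀ R' ∈ S'.raws, ∃ R ∈ S.raws, SubR R R' := by
  intro S S' h
  refine SubS.rec (motive_1 := fun _ _ _ => True)
    (motive_2 := fun S S' _ => ∀ R' ∈ S'.raws, ∃ R ∈ S.raws, SubR R R')
    (motive_3 := fun _ _ _ => True) ?_ ?_ ?_ ?_ ?_ ?_ ?_ ?_ h
  · intro a; trivial
  · intros; trivial
  · -- ofRaw
    intro R R' hr _ R'' hR''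
    simp only [STy.raws, List.mem_singleton] at hR''
    subst hR''
    exact ⟨R, List.mem_singleton_self _, hr⟩
  · -- weaken
    intro l l' S' h hsub ih R' hR'
    obtain ⟨R, hR, hr⟩ := ih R' hR'
    exact ⟨R, hsub.subset hR, hr⟩
  · -- pair
    intro S l' hp ih R' hR'
    exact ih R' hR' R' (List.mem_singleton_self _)
  · intros; trivial
  · intros; trivial
  · intros; trivial

theorem charS {l l' : List RawTy} (h : SubS (.inter l) (.inter l')) :
    ∀ R' ∈ l', ∃ R ∈ l, SubR R R' := charS_aux h

/-- Characterization of `SubS`, backward direction. -/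
theorem charS' {l l' : List RawTy} (h : ∀ R' ∈ l', ∃ R ∈ l, SubR R R') :
    SubS (.inter l) (.inter l') := by
  refine .pair fun R' hR' => ?_
  obtain ⟨R, hR, hr⟩ := h R' hR'
  exact .weaken (.ofRaw hr) (List.singleton_subperm_iff.2 hR)

/-- Characterization of `SubT`, forward direction. -/
theorem charT_aux : ∀ {T T' : TTy}, SubT T T' →
    ∀ S ∈ T.parts, ∃ S' ∈ T'.parts, SubS S S' := by
  intro T T' h
  refine SubT.rec (motive_1 := fun _ _ _ => True)
    (motive_2 := fun _ _ _ => True)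
    (motive_3 := fun T T' _ => ∀ S ∈ T.parts, ∃ S' ∈ T'.parts, SubS S S') ?_ ?_ ?_ ?_ ?_ ?_ ?_ ?_ h
  · intro a; trivial
  · intros; trivial
  · intros; trivial
  · intros; trivial
  · intros; trivial
  · -- ofS
    intro S S' hs _ S'' hS''
    simp only [TTy.parts, List.mem_singleton] at hS''
    subst hS''
    exact ⟨S', List.mem_singleton_self _, hs⟩
  · -- widen
    intro T l l' h hsub ih S hS
    obtain ⟨S', hS', hs⟩ := ih S hS
    exact ⟨S', hsub.subset hS', hs⟩
  · -- copair
    intro l T hp ih S hS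
    exact ih S hS S (List.mem_singleton_self _)

theorem charT {l l' : List STy} (h : SubT (.union l) (.union l')) :
    ∀ S ∈ l, ∃ S' ∈ l', SubS S S' := charT_aux h

/-- Characterization of `SubT`, backward direction. -/
theorem charT' {l l' : List STy} (h : ∀ S ∈ l, ∃ S' ∈ l', SubS S S') :
    SubT (.union l) (.union l') := by
  refine .copair fun S hS => ?_
  obtain ⟨S', hS', hs⟩ := h S hS
  exact .widen (.ofS hs) (List.singleton_subperm_iff.2 hS')

mutual
theorem reflR : ∀ R : RawTy, SubR R R
  | .atom a => .atom a
  | .arrow S T => .arrow (reflS S) (reflT T)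
  termination_by R => sizeOf R
  decreasing_by all_goals (simp_wf; try omega)
theorem reflS : ∀ S : STy, SubS S S
  | .inter l => charS' fun R' hR' => ⟨R', hR', reflR R'⟩
  termination_by S => sizeOf S
  decreasing_by simp_wf; have := List.sizeOf_lt_of_mem hR'; omega
theorem reflT : ∀ T : TTy, SubT T T
  | .union l => charT' fun S hS => ⟨S, hS, reflS S⟩
  termination_by T => sizeOf T
  decreasing_by simp_wf; have := List.sizeOf_lt_of_mem hS; omega
end

/-- Transitivity, by strong induction on the size of the middle term. -/
theorem trans_all : ∀ n : ℕ,
    (∀ R' : RawTy, sizeOf R' < n → ∀ R R'', SubR R R' → SubR R' R'' → SubR R R'') ∧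
    (∀ S' : STy, sizeOf S' < n → ∀ S S'', SubS S S' → SubS S' S'' → SubS S S'') ∧
    (∀ T' : TTy, sizeOf T' < n → ∀ T T'', SubT T T' → SubT T' T'' → SubT T T'') := by
  intro n
  induction n using Nat.strong_induction_on with
  | _ n ih =>
    refine ⟨?_, ?_, ?_⟩
    · rintro R' hn R R'' h1 h2
      cases h1 with
      | atom a => exact h2
      | @arrow S S' T T' hS hT =>
        cases h2 with
        | @arrow _ S'' _ T'' hS' hT' =>
          have hs : sizeOf S' + 1 < n := by simp at hn; omega
          have ht : sizeOf T' + 1 < n := by simp at hn; omega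
          exact .arrow
            ((ih (sizeOf S' + 1) hs).2.1 S' (Nat.lt_succ_self _) _ _ hS' hS)
            ((ih (sizeOf T' + 1) ht).2.2 T' (Nat.lt_succ_self _) _ _ hT hT')
    · rintro ⟨m⟩ hn ⟨l⟩ ⟨l''⟩ h1 h2
      refine charS' fun R'' hR'' => ?_
      obtain ⟨R', hR', hr'⟩ := charS h2 R'' hR''
      obtain ⟨R, hR, hr⟩ := charS h1 R' hR'
      have hsz : sizeOf R' + 1 < n := by
        have := List.sizeOf_lt_of_mem hR'; simp at hn; omega
      exact ⟨R, hR, (ih (sizeOf R' + 1) hsz).1 R' (Nat.lt_succ_self _) _ _ hr hr'⟩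
    · rintro ⟨m⟩ hn ⟨l⟩ ⟨l''⟩ h1 h2
      refine charT' fun S hS => ?_
      obtain ⟨S', hS', hs⟩ := charT h1 S hS
      obtain ⟨S'', hS'', hs'⟩ := charT h2 S' hS'
      have hsz : sizeOf S' + 1 < n := by
        have := List.sizeOf_lt_of_mem hS'; simp at hn; omega
      exact ⟨S'', hS'', (ih (sizeOf S' + 1) hsz).2.1 S' (Nat.lt_succ_self _) _ _ hs hs'⟩

theorem transS {S S' S'' : STy} (h1 : SubS S S') (h2 : SubS S' S'') : SubS S S'' :=
  (trans_all (sizeOf S' + 1)).2.1 S' (Nat.lt_succ_self _) _ _ h1 h2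

theorem transT {T T' T'' : TTy} (h1 : SubT T T') (h2 : SubT T' T'') : SubT T T'' :=
  (trans_all (sizeOf T' + 1)).2.2 T' (Nat.lt_succ_self _) _ _ h1 h2

section Sound
variable {motive_1 : ∀ R R' : RawTy, SubR1 R R' → Prop}

theorem soundT : ∀ {T T' : TTy}, SubT1 T T' → SubT T T' := by
  intro T T' h
  refine SubT1.rec (motive_1 := fun R R' _ => SubR R R')
    (motive_2 := fun S S' _ => SubS S S')
    (motive_3 := fun T T' _ => SubT T T')
    ?_ ?_ ?_ ?_ ?_ ?_ ?_ ?_ ?_ ?_ ?_ ?_ h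
  · exact fun a => .atom a
  · exact fun _ _ ihS ihT => .arrow ihS ihT
  · exact fun _ ih => .ofRaw ih
  · exact fun _ hsub ih => .weaken ih hsub
  · exact fun _ ih => .pair ih
  · exact fun S => reflS S
  · exact fun _ _ ih1 ih2 => transS ih1 ih2
  · exact fun _ ih => .ofS ih
  · exact fun _ hsub ih => .widen ih hsub
  · exact fun _ ih => .copair ih
  · exact fun T => reflT T
  · exact fun _ _ ih1 ih2 => transT ih1 ih2

theorem soundS : ∀ {S S' : STy}, SubS1 S S' → SubS S S' := by
  intro S S' h
  refine SubS1.rec (motive_1 := fun R R' _ => SubR R R')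
    (motive_2 := fun S S' _ => SubS S S')
    (motive_3 := fun T T' _ => SubT T T')
    ?_ ?_ ?_ ?_ ?_ ?_ ?_ ?_ ?_ ?_ ?_ ?_ h
  · exact fun a => .atom a
  · exact fun _ _ ihS ihT => .arrow ihS ihT
  · exact fun _ ih => .ofRaw ih
  · exact fun _ hsub ih => .weaken ih hsub
  · exact fun _ ih => .pair ih
  · exact fun S => reflS S
  · exact fun _ _ ih1 ih2 => transS ih1 ih2
  · exact fun _ ih => .ofS ih
  · exact fun _ hsub ih => .widen ih hsub
  · exact fun _ ih => .copair ih
  · exact fun T => reflT T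
  · exact fun _ _ ih1 ih2 => transT ih1 ih2

end Sound

/-- Reflexivity and transitivity are admissible: any subtype
judgment derivable in the extended system is derivable in the pure system. -/
theorem refl_trans_admissible :
    (∀ T T' : TTy, SubT1 T T' → SubT T T') ∧
    (∀ S S' : STy, SubS1 S S' → SubS S S') := by
  exact ⟨fun _ _ => soundT, fun _ _ => soundS⟩
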